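/- Write φ ≣ ψ for: for every alternation flag α ∈ {EA, AE} and every hyperassignment 𝔄, 𝔄 ⊨^α φ iff 𝔄 ⊨^α ψ; and φ ⟹ ψ for: for every α and 𝔄, 𝔄 ⊨^α φ implies 𝔄 ⊨^α ψ. Then for all GFG-QPTL formulas φ, φ₁, φ₂, every p ∈ AP, and every specification ς: (1) φ ≣ ¬¬φ; (2) φ₁∧φ₂ ⟹ φ₁; (3) φ₁ ⟹ φ₁∨φ₂; (4) φ₁∧(φ∧φ₂) ≣ (φ₁∧φ)∧φ₂; (5) φ₁∨(φ∨φ₂) ≣ (φ₁∨φ)∨φ₂; (6) φ₁∧φ₂ ≣ ¬(¬φ₁∨¬φ₂); (7) φ₁∨φ₂ ≣ ¬(¬φ₁∧¬φ₂); (8) ∃p:ς.φ ≣ ¬(∀p:ς.¬φ); (9) ∀p:ς.φ ≣ ¬(∃p:ς.¬φ). (Lemma 5, Boolean Laws.) -/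

import Mathlib

namespace GFG

/-- Temporal valuations. -/
abbrev Val : Type := ℕ → Bool

/-- Assignments over a type `AP` of atomic propositions. -/
abbrev Asg (AP : Type*) : Type _ := AP → Val

section Hyper

variable {X : Type*}

/-- A hyperassignment: a nonempty set of subsets not containing `∅`. -/
def IsHyp (𝔄 : Set (Set X)) : Prop := 𝔄 ≠ ∅ ∧ ∅ ∉ 𝔄

/-- A choice function for `𝔄`. -/
def IsChoice (𝔄 : Set (Set X)) (ϑ : Set X → X) : Prop := ∀ W ∈ 𝔄, ϑ W ∈ W

/-- The dual hyperassignment. -/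
def hdual (𝔄 : Set (Set X)) : Set (Set X) :=
  { Y | ∃ ϑ : Set X → X, IsChoice 𝔄 ϑ ∧ Y = ϑ '' 𝔄 }

/-- The preorder `⊑` on hyperassignments. -/
def hle (𝔄₁ 𝔄₂ : Set (Set X)) : Prop := ∀ W₁ ∈ 𝔄₁, ∃ W₂ ∈ 𝔄₂, W₂ ⊆ W₁

/-- The equivalence `≡` on hyperassignments. -/
def heqv (𝔄₁ 𝔄₂ : Set (Set X)) : Prop := hle 𝔄₁ 𝔄₂ ∧ hle 𝔄₂ 𝔄₁

/-- `par 𝔄`: partitions of `𝔄` into two disjoint parts. -/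
def par (𝔄 : Set (Set X)) : Set (Set (Set X) × Set (Set X)) :=
  { pr | pr.1 ∪ pr.2 = 𝔄 ∧ Disjoint pr.1 pr.2 }

end Hyper

variable {AP : Type*}

/-- `a₁ ≈_p^{>k} a₂`. -/
def ApproxGT (p : AP) (k : ℕ) (a₁ a₂ : Asg AP) : Prop :=
  (∀ q, q ≠ p → a₁ q = a₂ q) ∧ ∀ t ≤ k, a₁ p t = a₂ p t

/-- `a₁ ≈_p^{≥k} a₂`. -/
def ApproxGE (p : AP) (k : ℕ) (a₁ a₂ : Asg AP) : Prop :=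
  (∀ q, q ≠ p → a₁ q = a₂ q) ∧ ∀ t < k, a₁ p t = a₂ p t

/-- Quantifier specifications `ς = (B,S)`. -/
abbrev Spec (AP : Type*) := Set AP × Set AP

/-- A `ς`-functor. -/
def IsSpecFunctor (ς : Spec AP) (F : Asg AP → Val) : Prop :=
  (∀ (k : ℕ) (a₁ a₂ : Asg AP), (∃ p ∈ ς.1, ApproxGT p k a₁ a₂) → F a₁ k = F a₂ k) ∧
  (∀ (k : ℕ) (a₁ a₂ : Asg AP), (∃ p ∈ ς.2, ApproxGE p k a₁ a₂) → F a₁ k = F a₂ k)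

variable [DecidableEq AP]

/-- `ext(a,F,p)`. -/
def extAsg (a : Asg AP) (F : Asg AP → Val) (p : AP) : Asg AP :=
  Function.update a p (F a)

/-- `ext(W,F,p)`. -/
def extSet (W : Set (Asg AP)) (F : Asg AP → Val) (p : AP) : Set (Asg AP) :=
  (fun a => extAsg a F p) '' W

/-- `ext_ς(𝔄,p)`. -/
def extSpec (ς : Spec AP) (𝔄 : Set (Set (Asg AP))) (p : AP) : Set (Set (Asg AP)) :=
  { Y | ∃ W ∈ 𝔄, ∃ F : Asg AP → Val, IsSpecFunctor ς F ∧ Y = extSet W F p }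

/-- Alternation flags. -/
inductive Flag : Type
  | EA : Flag
  | AE : Flag
  deriving DecidableEq

/-- The dual flag. -/
def Flag.dual : Flag → Flag
  | .EA => .AE
  | .AE => .EA

/-- GFG-QPTL formulas (LTL formulas abstracted as arbitrary sets of assignments). -/
inductive Formula (AP : Type*) : Type _ where
  | atom : Set (Asg AP) → Formula AP
  | neg : Formula AP → Formula AP
  | conj : Formula AP → Formula AP → Formula AP
  | disj : Formula AP → Formula AP → Formula AP
  | ex : AP → Spec AP → Formula AP → Formula AP
  | all : AP → Spec AP → Formula AP → Formula AP

/-- The alternating Hodges semantics `𝔄 ⊨^α φ`. -/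
def Sat : Formula AP → Flag → Set (Set (Asg AP)) → Prop
  | .atom Ψ, .EA, 𝔄 => ∃ W ∈ 𝔄, W ⊆ Ψ
  | .atom Ψ, .AE, 𝔄 => ∀ W ∈ 𝔄, W ∩ Ψ ≠ ∅
  | .neg φ, α, 𝔄 => ¬ Sat φ α.dual 𝔄
  | .conj φ₁ φ₂, .EA, 𝔄 =>
      ∀ pr ∈ par 𝔄, (pr.1 ≠ ∅ ∧ Sat φ₁ .EA pr.1) ∨ (pr.2 ≠ ∅ ∧ Sat φ₂ .EA pr.2)
  | .conj φ₁ φ₂, .AE, 𝔄 =>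
      ∀ pr ∈ par (hdual 𝔄), (pr.1 ≠ ∅ ∧ Sat φ₁ .EA pr.1) ∨ (pr.2 ≠ ∅ ∧ Sat φ₂ .EA pr.2)
  | .disj φ₁ φ₂, .AE, 𝔄 =>
      ∃ pr ∈ par 𝔄, (pr.1 ≠ ∅ → Sat φ₁ .AE pr.1) ∧ (pr.2 ≠ ∅ → Sat φ₂ .AE pr.2)
  | .disj φ₁ φ₂, .EA, 𝔄 =>
      ∃ pr ∈ par (hdual 𝔄), (pr.1 ≠ ∅ → Sat φ₁ .AE pr.1) ∧ (pr.2 ≠ ∅ → Sat φ₂ .AE pr.2)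
  | .ex p ς φ, .EA, 𝔄 => Sat φ .EA (extSpec ς 𝔄 p)
  | .ex p ς φ, .AE, 𝔄 => Sat φ .EA (extSpec ς (hdual 𝔄) p)
  | .all p ς φ, .AE, 𝔄 => Sat φ .AE (extSpec ς 𝔄 p)
  | .all p ς φ, .EA, 𝔄 => Sat φ .AE (extSpec ς (hdual 𝔄) p)

/-- `φ ≣ ψ`: equivalence under both alternation flags, over all hyperassignments. -/
def FEquiv (φ ψ : Formula AP) : Prop :=
  ∀ (α : Flag) (𝔄 : Set (Set (Asg AP))), IsHyp 𝔄 → (Sat φ α 𝔄 ↔ Sat ψ α 𝔄)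

/-- `φ ⟹ ψ`: implication under both alternation flags, over all hyperassignments. -/
def FImplies (φ ψ : Formula AP) : Prop :=
  ∀ (α : Flag) (𝔄 : Set (Set (Asg AP))), IsHyp 𝔄 → Sat φ α 𝔄 → Sat ψ α 𝔄

/-! ### Auxiliary lemmas -/

section AuxHyper

variable {X : Type*} {𝔄 𝔅 : Set (Set X)}

lemma exists_sel (h : hle 𝔄 𝔅) : ∃ g : Set X → Set X, ∀ W ∈ 𝔄, g W ∈ 𝔅 ∧ g W ⊆ W := by
  classical
  choose g h1 h2 using h
  exact ⟨fun W => if hW : W ∈ 𝔄 then g W hW else ∅,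
    fun W hW => by simp only [dif_pos hW]; exact ⟨h1 W hW, h2 W hW⟩⟩

lemma hle_ne (h : hle 𝔄 𝔅) (h0 : 𝔄 ≠ ∅) : 𝔅 ≠ ∅ := by
  obtain ⟨W, hW⟩ := Set.nonempty_iff_ne_empty.2 h0
  obtain ⟨W₂, hW₂, -⟩ := h W hW
  exact Set.nonempty_iff_ne_empty.1 ⟨W₂, hW₂⟩

lemma par_pullback (h : hle 𝔄 𝔅) {pr : Set (Set X) × Set (Set X)} (hpr : pr ∈ par 𝔅) :
    ∃ qr ∈ par 𝔄, hle qr.1 pr.1 ∧ hle qr.2 pr.2 := by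
  obtain ⟨g, hg⟩ := exists_sel h
  refine ⟨⟨{W | W ∈ 𝔄 ∧ g W ∈ pr.1}, {W | W ∈ 𝔄 ∧ g W ∉ pr.1}⟩, ⟨?_, ?_⟩, ?_, ?_⟩
  · ext W
    by_cases hgW : g W ∈ pr.1 <;> simp [hgW]
  · rw [Set.disjoint_left]
    rintro W ⟨hW, h1⟩ ⟨-, h2⟩
    exact h2 h1
  · rintro W ⟨hW, h1⟩
    exact ⟨g W, h1, (hg W hW).2⟩
  · rintro W ⟨hW, h1⟩
    have hm : g W ∈ pr.1 ∪ pr.2 := hpr.1 ▸ (hg W hW).1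
    exact ⟨g W, hm.resolve_left h1, (hg W hW).2⟩

lemma hdual_antitone (h : hle 𝔄 𝔅) : hle (hdual 𝔅) (hdual 𝔄) := by
  classical
  rintro Y ⟨ϑ, hϑ, rfl⟩
  obtain ⟨g, hg⟩ := exists_sel h
  refine ⟨(fun W => if W ∈ 𝔄 then ϑ (g W) else ϑ W) '' 𝔄,
    ⟨_, fun W hW => ?_, rfl⟩, ?_⟩
  · simp only [if_pos hW]
    exact (hg W hW).2 (hϑ _ (hg W hW).1)
  · rintro x ⟨W, hW, rfl⟩
    simp only [if_pos hW]
    exact ⟨g W, (hg W hW).1, rfl⟩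

lemma isHyp_nonempty (h : IsHyp 𝔄) : Nonempty X := by
  obtain ⟨W, hW⟩ := Set.nonempty_iff_ne_empty.2 h.1
  obtain ⟨x, -⟩ := Set.nonempty_iff_ne_empty.2 (fun he => h.2 (he ▸ hW))
  exact ⟨x⟩

lemma isHyp_exists_choice (h : IsHyp 𝔄) : ∃ ϑ, IsChoice 𝔄 ϑ := by
  classical
  obtain ⟨x0⟩ := isHyp_nonempty h
  have hne : ∀ W ∈ 𝔄, ∃ x, x ∈ W := fun W hW =>
    Set.nonempty_iff_ne_empty.2 (fun he => h.2 (he ▸ hW))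
  choose f hf using hne
  exact ⟨fun W => if hW : W ∈ 𝔄 then f W hW else x0,
    fun W hW => by simp only [dif_pos hW]; exact hf W hW⟩

lemma isHyp_hdual (h : IsHyp 𝔄) : IsHyp (hdual 𝔄) := by
  obtain ⟨ϑ, hϑ⟩ := isHyp_exists_choice h
  constructor
  · exact Set.nonempty_iff_ne_empty.1 ⟨ϑ '' 𝔄, ϑ, hϑ, rfl⟩
  · rintro ⟨ϑ', hϑ', he⟩
    obtain ⟨W, hW⟩ := Set.nonempty_iff_ne_empty.2 h.1
    have : ϑ' W ∈ ϑ' '' 𝔄 := Set.mem_image_of_mem ϑ' hW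
    rw [← he] at this
    exact Set.notMem_empty _ this

lemma hdual_hdual (h : IsHyp 𝔄) : heqv (hdual (hdual 𝔄)) 𝔄 := by
  classical
  obtain ⟨x0⟩ := isHyp_nonempty h
  constructor
  · rintro Z ⟨Θ, hΘ, rfl⟩
    by_contra hc
    push_neg at hc
    have hc' : ∀ W ∈ 𝔄, ∃ x ∈ W, x ∉ Θ '' hdual 𝔄 := fun W hW =>
      Set.not_subset.1 (hc W hW)
    choose f hf1 hf2 using hc'
    set ϑ : Set X → X := fun W => if hW : W ∈ 𝔄 then f W hW else x0 with hϑdef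
    have hch : IsChoice 𝔄 ϑ := fun W hW => by
      simp only [hϑdef, dif_pos hW]; exact hf1 W hW
    have hY : ϑ '' 𝔄 ∈ hdual 𝔄 := ⟨ϑ, hch, rfl⟩
    have h1 : Θ (ϑ '' 𝔄) ∈ ϑ '' 𝔄 := hΘ _ hY
    have h2 : Θ (ϑ '' 𝔄) ∈ Θ '' hdual 𝔄 := Set.mem_image_of_mem Θ hY
    obtain ⟨W, hW, hWeq⟩ := h1
    have hϑW : ϑ W = f W hW := by simp only [hϑdef]; rw [dif_pos hW]
    rw [← hWeq, hϑW] at h2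
    exact hf2 W hW h2

  · intro W hW
    have hne : ∀ Y ∈ hdual 𝔄, ∃ x, x ∈ Y ∩ W := by
      rintro Y ⟨ϑ, hϑ, rfl⟩
      exact ⟨ϑ W, Set.mem_image_of_mem ϑ hW, hϑ W hW⟩
    choose f hf using hne
    refine ⟨(fun Y => if hY : Y ∈ hdual 𝔄 then f Y hY else x0) '' hdual 𝔄,
      ⟨_, fun Y hY => ?_, rfl⟩, ?_⟩
    · simp only [dif_pos hY]
      exact (hf Y hY).1
    · rintro x ⟨Y, hY, rfl⟩
      simp only [dif_pos hY]
      exact (hf Y hY).2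

end AuxHyper

section AuxSat

variable {AP : Type*} [DecidableEq AP]

lemma extSpec_mono (ς : Spec AP) (p : AP) {𝔄 𝔅 : Set (Set (Asg AP))} (h : hle 𝔄 𝔅) :
    hle (extSpec ς 𝔄 p) (extSpec ς 𝔅 p) := by
  rintro Y ⟨W, hW, F, hF, rfl⟩
  obtain ⟨W₂, hW₂, hsub⟩ := h W hW
  exact ⟨extSet W₂ F p, ⟨W₂, hW₂, F, hF, rfl⟩, Set.image_mono hsub⟩

lemma heqv_extSpec (ς : Spec AP) (p : AP) {𝔄 𝔅 : Set (Set (Asg AP))} (h : heqv 𝔄 𝔅) :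
    heqv (extSpec ς 𝔄 p) (extSpec ς 𝔅 p) :=
  ⟨extSpec_mono ς p h.1, extSpec_mono ς p h.2⟩

lemma sat_mono (φ : Formula AP) :
    ∀ ⦃𝔄 𝔅 : Set (Set (Asg AP))⦄, hle 𝔄 𝔅 →
      (Sat φ .EA 𝔄 → Sat φ .EA 𝔅) ∧ (Sat φ .AE 𝔅 → Sat φ .AE 𝔄) := by
  induction φ with
  | atom Ψ =>
    intro 𝔄 𝔅 h
    simp only [Sat]
    constructor
    · rintro ⟨W, hW, hsub⟩
      obtain ⟨W₂, hW₂, h2⟩ := h W hW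
      exact ⟨W₂, hW₂, h2.trans hsub⟩
    · intro hs W hW he
      obtain ⟨W₂, hW₂, h2⟩ := h W hW
      exact hs W₂ hW₂ (Set.eq_empty_of_subset_empty (he ▸ Set.inter_subset_inter_left Ψ h2))
  | neg φ ih =>
    intro 𝔄 𝔅 h
    simp only [Sat, Flag.dual]
    exact ⟨fun h1 h2 => h1 ((ih h).2 h2), fun h1 h2 => h1 ((ih h).1 h2)⟩
  | conj φ₁ φ₂ ih₁ ih₂ =>
    intro 𝔄 𝔅 h
    simp only [Sat]
    constructor
    · intro hs pr hpr
      obtain ⟨qr, hqr, h1, h2⟩ := par_pullback h hpr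
      rcases hs qr hqr with ⟨hne, hsat⟩ | ⟨hne, hsat⟩
      · exact Or.inl ⟨hle_ne h1 hne, (ih₁ h1).1 hsat⟩
      · exact Or.inr ⟨hle_ne h2 hne, (ih₂ h2).1 hsat⟩
    · intro hs pr hpr
      obtain ⟨qr, hqr, h1, h2⟩ := par_pullback (hdual_antitone h) hpr
      rcases hs qr hqr with ⟨hne, hsat⟩ | ⟨hne, hsat⟩
      · exact Or.inl ⟨hle_ne h1 hne, (ih₁ h1).1 hsat⟩
      · exact Or.inr ⟨hle_ne h2 hne, (ih₂ h2).1 hsat⟩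
  | disj φ₁ φ₂ ih₁ ih₂ =>
    intro 𝔄 𝔅 h
    simp only [Sat]
    constructor
    · rintro ⟨pr, hpr, hc1, hc2⟩
      obtain ⟨qr, hqr, h1, h2⟩ := par_pullback (hdual_antitone h) hpr
      exact ⟨qr, hqr, fun hne => (ih₁ h1).2 (hc1 (hle_ne h1 hne)),
        fun hne => (ih₂ h2).2 (hc2 (hle_ne h2 hne))⟩
    · rintro ⟨pr, hpr, hc1, hc2⟩
      obtain ⟨qr, hqr, h1, h2⟩ := par_pullback h hpr
      exact ⟨qr, hqr, fun hne => (ih₁ h1).2 (hc1 (hle_ne h1 hne)),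
        fun hne => (ih₂ h2).2 (hc2 (hle_ne h2 hne))⟩
  | ex p ς φ ih =>
    intro 𝔄 𝔅 h
    simp only [Sat]
    exact ⟨(ih (extSpec_mono ς p h)).1, (ih (extSpec_mono ς p (hdual_antitone h))).1⟩
  | all p ς φ ih =>
    intro 𝔄 𝔅 h
    simp only [Sat]
    exact ⟨(ih (extSpec_mono ς p (hdual_antitone h))).2, (ih (extSpec_mono ς p h)).2⟩

lemma sat_heqv (φ : Formula AP) {𝔄 𝔅 : Set (Set (Asg AP))} (h : heqv 𝔄 𝔅) :
    ∀ α, Sat φ α 𝔄 ↔ Sat φ α 𝔅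
  | .EA => ⟨(sat_mono φ h.1).1, (sat_mono φ h.2).1⟩
  | .AE => ⟨(sat_mono φ h.2).2, (sat_mono φ h.1).2⟩

lemma sat_dual (φ : Formula AP) :
    ∀ ⦃𝔄 : Set (Set (Asg AP))⦄, IsHyp 𝔄 →
      (Sat φ .AE 𝔄 ↔ Sat φ .EA (hdual 𝔄)) ∧ (Sat φ .EA 𝔄 ↔ Sat φ .AE (hdual 𝔄)) := by
  induction φ with
  | atom Ψ =>
    intro 𝔄 h
    classical
    obtain ⟨x0⟩ := isHyp_nonempty h
    constructor
    · simp only [Sat]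
      constructor
      · intro hs
        have hne : ∀ W ∈ 𝔄, ∃ x, x ∈ W ∩ Ψ := fun W hW =>
          Set.nonempty_iff_ne_empty.2 (hs W hW)
        choose f hf using hne
        refine ⟨(fun W => if hW : W ∈ 𝔄 then f W hW else x0) '' 𝔄,
          ⟨_, fun W hW => ?_, rfl⟩, ?_⟩
        · simp only [dif_pos hW]
          exact (hf W hW).1
        · rintro x ⟨W, hW, rfl⟩
          simp only [dif_pos hW]
          exact (hf W hW).2
      · rintro ⟨Y, ⟨ϑ, hϑ, rfl⟩, hsub⟩ W hW
        exact Set.nonempty_iff_ne_empty.1 ⟨ϑ W, hϑ W hW, hsub (Set.mem_image_of_mem ϑ hW)⟩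
    · simp only [Sat]
      constructor
      · rintro ⟨W, hW, hsub⟩ Y hY
        obtain ⟨ϑ, hϑ, rfl⟩ := hY
        exact Set.nonempty_iff_ne_empty.1
          ⟨ϑ W, Set.mem_image_of_mem ϑ hW, hsub (hϑ W hW)⟩
      · intro hs
        by_contra hc
        push_neg at hc
        have hc' : ∀ W ∈ 𝔄, ∃ x ∈ W, x ∉ Ψ := fun W hW => Set.not_subset.1 (hc W hW)
        choose f hf1 hf2 using hc'
        set ϑ : Set (Asg AP) → Asg AP := fun W => if hW : W ∈ 𝔄 then f W hW else x0
          with hϑdef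
        have hch : IsChoice 𝔄 ϑ := fun W hW => by
          simp only [hϑdef, dif_pos hW]; exact hf1 W hW
        apply hs (ϑ '' 𝔄) ⟨ϑ, hch, rfl⟩
        ext x
        simp only [Set.mem_inter_iff, Set.mem_empty_iff_false, iff_false, not_and]
        rintro ⟨W, hW, rfl⟩
        simp only [hϑdef, dif_pos hW]
        exact hf2 W hW
  | neg φ ih =>
    intro 𝔄 h
    simp only [Sat, Flag.dual]
    exact ⟨not_congr (ih h).2, not_congr (ih h).1⟩
  | conj φ₁ φ₂ ih₁ ih₂ =>
    intro 𝔄 h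
    exact ⟨Iff.rfl, (sat_heqv (Formula.conj φ₁ φ₂) (hdual_hdual h) .EA).symm⟩
  | disj φ₁ φ₂ ih₁ ih₂ =>
    intro 𝔄 h
    exact ⟨(sat_heqv (Formula.disj φ₁ φ₂) (hdual_hdual h) .AE).symm, Iff.rfl⟩
  | ex p ς φ ih =>
    intro 𝔄 h
    exact ⟨Iff.rfl, (sat_heqv φ (heqv_extSpec ς p (hdual_hdual h)) .EA).symm⟩
  | all p ς φ ih =>
    intro 𝔄 h
    exact ⟨(sat_heqv φ (heqv_extSpec ς p (hdual_hdual h)) .AE).symm, Iff.rfl⟩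

end AuxSat

section AuxAssoc

variable {X : Type*} {𝔄 : Set (Set X)} {A B C : Set (Set X) → Prop}

lemma conj3_left (h𝔄 : 𝔄 ≠ ∅) :
    (∀ pr ∈ par 𝔄, (pr.1 ≠ ∅ ∧ A pr.1) ∨
        (pr.2 ≠ ∅ ∧ ∀ qr ∈ par pr.2, (qr.1 ≠ ∅ ∧ B qr.1) ∨ (qr.2 ≠ ∅ ∧ C qr.2))) ↔
      (∀ u v w : Set (Set X), u ∪ (v ∪ w) = 𝔄 → Disjoint u v → Disjoint u w → Disjoint v w →
        (u ≠ ∅ ∧ A u) ∨ (v ≠ ∅ ∧ B v) ∨ (w ≠ ∅ ∧ C w)) := by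
  constructor
  · intro h u v w huni d12 d13 d23
    rcases h (u, v ∪ w) ⟨huni, Set.disjoint_union_right.2 ⟨d12, d13⟩⟩ with ⟨hne, ha⟩ | ⟨hne, hin⟩
    · exact Or.inl ⟨hne, ha⟩
    · rcases hin (v, w) ⟨rfl, d23⟩ with h' | h'
      · exact Or.inr (Or.inl h')
      · exact Or.inr (Or.inr h')
  · intro h pr hpr
    obtain ⟨huni, hdisj⟩ := hpr
    by_cases hA : pr.1 ≠ ∅ ∧ A pr.1
    · exact Or.inl hA
    · refine Or.inr ⟨?_, ?_⟩
      · intro h2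
        rcases h 𝔄 ∅ ∅ (by simp) (by simp) (by simp) (by simp) with h' | h' | h'
        · have hp1 : pr.1 = 𝔄 := by rw [← huni, h2, Set.union_empty]
          exact hA (hp1 ▸ h')
        · exact h'.1 rfl
        · exact h'.1 rfl
      · intro qr hqr
        obtain ⟨hq, hdq⟩ := hqr
        have s1 : qr.1 ⊆ pr.2 := hq ▸ Set.subset_union_left
        have s2 : qr.2 ⊆ pr.2 := hq ▸ Set.subset_union_right
        rcases h pr.1 qr.1 qr.2 (by rw [hq, huni]) (hdisj.mono_right s1)
          (hdisj.mono_right s2) hdq with h' | h' | h'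
        · exact absurd h' hA
        · exact Or.inl h'
        · exact Or.inr h'

lemma conj3_right (h𝔄 : 𝔄 ≠ ∅) :
    (∀ pr ∈ par 𝔄, (pr.1 ≠ ∅ ∧ ∀ qr ∈ par pr.1,
          (qr.1 ≠ ∅ ∧ A qr.1) ∨ (qr.2 ≠ ∅ ∧ B qr.2)) ∨ (pr.2 ≠ ∅ ∧ C pr.2)) ↔
      (∀ u v w : Set (Set X), u ∪ (v ∪ w) = 𝔄 → Disjoint u v → Disjoint u w → Disjoint v w →
        (u ≠ ∅ ∧ A u) ∨ (v ≠ ∅ ∧ B v) ∨ (w ≠ ∅ ∧ C w)) := by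
  constructor
  · intro h u v w huni d12 d13 d23
    rcases h (u ∪ v, w) ⟨by rw [Set.union_assoc]; exact huni,
        Set.disjoint_union_left.2 ⟨d13, d23⟩⟩ with ⟨hne, hin⟩ | ⟨hne, hc⟩
    · rcases hin (u, v) ⟨rfl, d12⟩ with h' | h'
      · exact Or.inl h'
      · exact Or.inr (Or.inl h')
    · exact Or.inr (Or.inr ⟨hne, hc⟩)
  · intro h pr hpr
    obtain ⟨huni, hdisj⟩ := hpr
    by_cases hC : pr.2 ≠ ∅ ∧ C pr.2
    · exact Or.inr hC
    · refine Or.inl ⟨?_, ?_⟩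
      · intro h1
        rcases h ∅ ∅ 𝔄 (by simp) (by simp) (by simp) (by simp) with h' | h' | h'
        · exact h'.1 rfl
        · exact h'.1 rfl
        · have hp2 : pr.2 = 𝔄 := by rw [← huni, h1, Set.empty_union]
          exact hC (hp2 ▸ h')
      · intro qr hqr
        obtain ⟨hq, hdq⟩ := hqr
        have s1 : qr.1 ⊆ pr.1 := hq ▸ Set.subset_union_left
        have s2 : qr.2 ⊆ pr.1 := hq ▸ Set.subset_union_right
        rcases h qr.1 qr.2 pr.2 (by rw [← Set.union_assoc, hq, huni]) hdq
          (hdisj.mono_left s1) (hdisj.mono_left s2) with h' | h' | h'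
        · exact Or.inl h'
        · exact Or.inr h'
        · exact absurd h' hC

lemma conj_sem_assoc (h𝔄 : 𝔄 ≠ ∅) :
    (∀ pr ∈ par 𝔄, (pr.1 ≠ ∅ ∧ A pr.1) ∨
        (pr.2 ≠ ∅ ∧ ∀ qr ∈ par pr.2, (qr.1 ≠ ∅ ∧ B qr.1) ∨ (qr.2 ≠ ∅ ∧ C qr.2))) ↔
      (∀ pr ∈ par 𝔄, (pr.1 ≠ ∅ ∧ ∀ qr ∈ par pr.1,
          (qr.1 ≠ ∅ ∧ A qr.1) ∨ (qr.2 ≠ ∅ ∧ B qr.2)) ∨ (pr.2 ≠ ∅ ∧ C pr.2)) :=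
  (conj3_left h𝔄).trans (conj3_right h𝔄).symm

lemma disj3_left :
    (∃ pr ∈ par 𝔄, (pr.1 ≠ ∅ → A pr.1) ∧
        (pr.2 ≠ ∅ → ∃ qr ∈ par pr.2, (qr.1 ≠ ∅ → B qr.1) ∧ (qr.2 ≠ ∅ → C qr.2))) ↔
      (∃ u v w : Set (Set X), (u ∪ (v ∪ w) = 𝔄 ∧ Disjoint u v ∧ Disjoint u w ∧ Disjoint v w) ∧
        (u ≠ ∅ → A u) ∧ (v ≠ ∅ → B v) ∧ (w ≠ ∅ → C w)) := by
  constructor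
  · rintro ⟨pr, ⟨huni, hdisj⟩, h1, h2⟩
    by_cases h0 : pr.2 = ∅
    · refine ⟨pr.1, ∅, ∅, ⟨by rw [Set.union_empty, ← h0]; exact huni, by simp, by simp, by simp⟩,
        h1, fun h => absurd rfl h, fun h => absurd rfl h⟩
    · obtain ⟨qr, ⟨hq, hdq⟩, hb, hc⟩ := h2 h0
      have s1 : qr.1 ⊆ pr.2 := hq ▸ Set.subset_union_left
      have s2 : qr.2 ⊆ pr.2 := hq ▸ Set.subset_union_right
      exact ⟨pr.1, qr.1, qr.2, ⟨by rw [hq, huni], hdisj.mono_right s1,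
        hdisj.mono_right s2, hdq⟩, h1, hb, hc⟩
  · rintro ⟨u, v, w, ⟨huni, d12, d13, d23⟩, ha, hb, hc⟩
    exact ⟨(u, v ∪ w), ⟨huni, Set.disjoint_union_right.2 ⟨d12, d13⟩⟩, ha,
      fun _ => ⟨(v, w), ⟨rfl, d23⟩, hb, hc⟩⟩

lemma disj3_right :
    (∃ pr ∈ par 𝔄, (pr.1 ≠ ∅ → ∃ qr ∈ par pr.1,
          (qr.1 ≠ ∅ → A qr.1) ∧ (qr.2 ≠ ∅ → B qr.2)) ∧ (pr.2 ≠ ∅ → C pr.2)) ↔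
      (∃ u v w : Set (Set X), (u ∪ (v ∪ w) = 𝔄 ∧ Disjoint u v ∧ Disjoint u w ∧ Disjoint v w) ∧
        (u ≠ ∅ → A u) ∧ (v ≠ ∅ → B v) ∧ (w ≠ ∅ → C w)) := by
  constructor
  · rintro ⟨pr, ⟨huni, hdisj⟩, h1, h2⟩
    by_cases h0 : pr.1 = ∅
    · refine ⟨∅, ∅, pr.2, ⟨by rw [Set.empty_union, Set.empty_union, ← huni, h0, Set.empty_union],
        by simp, by simp, by simp⟩, fun h => absurd rfl h, fun h => absurd rfl h, h2⟩
    · obtain ⟨qr, ⟨hq, hdq⟩, ha, hb⟩ := h1 h0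
      have s1 : qr.1 ⊆ pr.1 := hq ▸ Set.subset_union_left
      have s2 : qr.2 ⊆ pr.1 := hq ▸ Set.subset_union_right
      exact ⟨qr.1, qr.2, pr.2, ⟨by rw [← Set.union_assoc, hq, huni], hdq,
        hdisj.mono_left s1, hdisj.mono_left s2⟩, ha, hb, h2⟩
  · rintro ⟨u, v, w, ⟨huni, d12, d13, d23⟩, ha, hb, hc⟩
    exact ⟨(u ∪ v, w), ⟨by rw [Set.union_assoc]; exact huni,
      Set.disjoint_union_left.2 ⟨d13, d23⟩⟩, fun _ => ⟨(u, v), ⟨rfl, d12⟩, ha, hb⟩, hc⟩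

lemma disj_sem_assoc :
    (∃ pr ∈ par 𝔄, (pr.1 ≠ ∅ → A pr.1) ∧
        (pr.2 ≠ ∅ → ∃ qr ∈ par pr.2, (qr.1 ≠ ∅ → B qr.1) ∧ (qr.2 ≠ ∅ → C qr.2))) ↔
      (∃ pr ∈ par 𝔄, (pr.1 ≠ ∅ → ∃ qr ∈ par pr.1,
          (qr.1 ≠ ∅ → A qr.1) ∧ (qr.2 ≠ ∅ → B qr.2)) ∧ (pr.2 ≠ ∅ → C pr.2)) :=
  disj3_left.trans disj3_right.symm

lemma not_exists_par {ι : Type*} {s : Set ι} {e₁ e₂ a b : ι → Prop} :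
    (∀ i ∈ s, (e₁ i ∧ a i) ∨ (e₂ i ∧ b i)) ↔
      ¬ ∃ i ∈ s, (e₁ i → ¬ a i) ∧ (e₂ i → ¬ b i) := by
  push_neg
  refine forall₂_congr fun i hi => ?_
  tauto

lemma exists_not_forall_par {ι : Type*} {s : Set ι} {e₁ e₂ a b : ι → Prop} :
    (∃ i ∈ s, (e₁ i → a i) ∧ (e₂ i → b i)) ↔
      ¬ ∀ i ∈ s, (e₁ i ∧ ¬ a i) ∨ (e₂ i ∧ ¬ b i) := by
  constructor
  · rintro ⟨i, hi, h1, h2⟩ hall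
    rcases hall i hi with ⟨he, ha⟩ | ⟨he, hb⟩
    · exact ha (h1 he)
    · exact hb (h2 he)
  · intro h
    by_contra hc
    push_neg at hc
    refine h fun i hi => ?_
    have := hc i hi
    tauto

lemma mem_par_self (𝔅 : Set (Set X)) : (⟨𝔅, ∅⟩ : Set (Set X) × Set (Set X)) ∈ par 𝔅 :=
  ⟨Set.union_empty 𝔅, Set.disjoint_empty 𝔅⟩

end AuxAssoc

/-- Lemma 5 (Boolean Laws). -/
theorem boolean_laws (φ φ₁ φ₂ : Formula AP) (p : AP) (ς : Spec AP) :
    FEquiv φ (.neg (.neg φ)) ∧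
    FImplies (.conj φ₁ φ₂) φ₁ ∧
    FImplies φ₁ (.disj φ₁ φ₂) ∧
    FEquiv (.conj φ₁ (.conj φ φ₂)) (.conj (.conj φ₁ φ) φ₂) ∧
    FEquiv (.disj φ₁ (.disj φ φ₂)) (.disj (.disj φ₁ φ) φ₂) ∧
    FEquiv (.conj φ₁ φ₂) (.neg (.disj (.neg φ₁) (.neg φ₂))) ∧
    FEquiv (.disj φ₁ φ₂) (.neg (.conj (.neg φ₁) (.neg φ₂))) ∧
    FEquiv (.ex p ς φ) (.neg (.all p ς (.neg φ))) ∧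
    FEquiv (.all p ς φ) (.neg (.ex p ς (.neg φ))) := by
  refine ⟨?_, ?_, ?_, ?_, ?_, ?_, ?_, ?_, ?_⟩
  · -- φ ≣ ¬¬φ
    intro α 𝔄 _
    cases α <;> simp [Sat, Flag.dual]
  · -- φ₁∧φ₂ ⟹ φ₁
    intro α 𝔄 h𝔄 hs
    cases α with
    | EA =>
      simp only [Sat] at hs
      rcases hs (𝔄, ∅) (mem_par_self 𝔄) with ⟨-, h⟩ | ⟨h, -⟩
      · exact h
      · exact absurd rfl h
    | AE =>
      simp only [Sat] at hs
      rcases hs (hdual 𝔄, ∅) (mem_par_self _) with ⟨-, h⟩ | ⟨h, -⟩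
      · exact ((sat_dual φ₁ h𝔄).1).2 h
      · exact absurd rfl h
  · -- φ₁ ⟹ φ₁∨φ₂
    intro α 𝔄 h𝔄 hs
    cases α with
    | EA =>
      simp only [Sat]
      exact ⟨(hdual 𝔄, ∅), mem_par_self _,
        fun _ => ((sat_dual φ₁ h𝔄).2).1 hs, fun h => absurd rfl h⟩
    | AE =>
      simp only [Sat]
      exact ⟨(𝔄, ∅), mem_par_self _, fun _ => hs, fun h => absurd rfl h⟩
  · -- conj assoc
    intro α 𝔄 h𝔄
    cases α with
    | EA => simp only [Sat]; exact conj_sem_assoc h𝔄.1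
    | AE => simp only [Sat]; exact conj_sem_assoc (isHyp_hdual h𝔄).1
  · -- disj assoc
    intro α 𝔄 _
    cases α with
    | EA => simp only [Sat]; exact disj_sem_assoc
    | AE => simp only [Sat]; exact disj_sem_assoc
  · -- de Morgan conj
    intro α 𝔄 _
    cases α with
    | EA => simp only [Sat, Flag.dual]; exact not_exists_par
    | AE => simp only [Sat, Flag.dual]; exact not_exists_par
  · -- de Morgan disj
    intro α 𝔄 _
    cases α with
    | EA => simp only [Sat, Flag.dual]; exact exists_not_forall_par
    | AE => simp only [Sat, Flag.dual]; exact exists_not_forall_par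
  · -- ex / all duality
    intro α 𝔄 _
    cases α <;> simp [Sat, Flag.dual]
  · -- all / ex duality
    intro α 𝔄 _
    cases α <;> simp [Sat, Flag.dual]

end GFG
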